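/- Let f ∈ ℝ[x,y] be a polynomial of degree n ≥ 3 whose top-degree homogeneous part f_n is elliptic (i.e., Hess(f_n)(x,y) > 0 for all (x,y) ≠ (0,0)). Then the set of hyperbolic points {(x,y) ∈ ℝ² : Hess(f)(x,y) ≤ 0} is bounded. -/

import Mathlib

open MvPolynomial

noncomputable def Hess (f : MvPolynomial (Fin 2) ℝ) : MvPolynomial (Fin 2) ℝ :=
  pderiv 0 (pderiv 0 f) * pderiv 1 (pderiv 1 f) - (pderiv 0 (pderiv 1 f)) ^ 2

namespace EllipticAux

lemma degree_single_one {σ : Type*} [DecidableEq σ] (i : σ) :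
    (Finsupp.single i 1).degree = 1 := by
  exact Finsupp.degree_single i 1

lemma degree_sub_single {σ : Type*} [DecidableEq σ] (d : σ →₀ ℕ) (i : σ) (h : d i ≠ 0) :
    (d - Finsupp.single i 1).degree + 1 = d.degree := by
  have hle : Finsupp.single i 1 ≤ d := by
    rw [Finsupp.single_le_iff]; omega
  have hc : (d - Finsupp.single i 1) + Finsupp.single i 1 = d := tsub_add_cancel_of_le hle
  have hadd : ∀ a b : σ →₀ ℕ, (a + b).degree = a.degree + b.degree := by
    intro a b
    simp [Finsupp.degree_eq_weight_one, map_add]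
  calc (d - Finsupp.single i 1).degree + 1
      = (d - Finsupp.single i 1).degree + (Finsupp.single i 1).degree := by
        rw [degree_single_one]
    _ = ((d - Finsupp.single i 1) + Finsupp.single i 1).degree := (hadd _ _).symm
    _ = d.degree := by rw [hc]

lemma sum_id_eq_degree {σ : Type*} (d : σ →₀ ℕ) :
    (d.sum fun _ e => e) = d.degree := rfl

lemma pderiv_isHomogeneous {σ : Type*} [DecidableEq σ] {p : MvPolynomial σ ℝ} {m : ℕ}
    (h : p.IsHomogeneous (m + 1)) (i : σ) : (pderiv i p).IsHomogeneous m := by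
  rw [← p.support_sum_monomial_coeff, map_sum]
  apply IsHomogeneous.sum
  intro d hd
  rw [pderiv_monomial]
  by_cases hdi : d i = 0
  · rw [hdi]
    simp only [Nat.cast_zero, mul_zero, map_zero]
    exact isHomogeneous_zero _ _ _
  · apply isHomogeneous_monomial
    have h1 := h (mem_support_iff.mp hd)
    rw [Pi.one_def, ← Finsupp.degree_eq_weight_one] at h1
    have h2 := degree_sub_single d i hdi
    omega

lemma totalDegree_pderiv_le' {σ : Type*} [DecidableEq σ] {p : MvPolynomial σ ℝ} {m : ℕ}
    (h : p.totalDegree ≤ m + 1) (i : σ) : (pderiv i p).totalDegree ≤ m := by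
  rw [← p.support_sum_monomial_coeff, map_sum]
  apply totalDegree_finsetSum_le
  intro d hd
  rw [pderiv_monomial]
  by_cases hdi : d i = 0
  · rw [hdi]
    simp only [Nat.cast_zero, mul_zero, map_zero, totalDegree_zero]
    exact Nat.zero_le _
  · refine le_trans (totalDegree_monomial_le _ _) ?_
    have h1 : d.degree ≤ m + 1 := by
      have := le_totalDegree hd
      rw [sum_id_eq_degree] at this
      omega
    have h2 := degree_sub_single d i hdi
    show ((d - Finsupp.single i 1).sum fun _ e => e) ≤ m
    rw [sum_id_eq_degree]
    omega

lemma eval_smul_of_isHomogeneous {p : MvPolynomial (Fin 2) ℝ} {m : ℕ}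
    (h : p.IsHomogeneous m) (t : ℝ) (v : Fin 2 → ℝ) :
    eval (fun j => t * v j) p = t ^ m * eval v p := by
  rw [eval_eq, eval_eq, Finset.mul_sum]
  apply Finset.sum_congr rfl
  intro d hd
  have h1 : (∑ j ∈ d.support, d j) = m := by
    have h2 := h (mem_support_iff.mp hd)
    rw [Pi.one_def, ← Finsupp.degree_eq_weight_one] at h2
    exact h2
  calc coeff d p * ∏ j ∈ d.support, (t * v j) ^ d j
      = coeff d p * ((∏ j ∈ d.support, t ^ d j) * ∏ j ∈ d.support, v j ^ d j) := by
        rw [← Finset.prod_mul_distrib]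
        simp [mul_pow]
    _ = t ^ m * (coeff d p * ∏ j ∈ d.support, v j ^ d j) := by
        rw [Finset.prod_pow_eq_pow_sum, h1]; ring

lemma eval_abs_le (p : MvPolynomial (Fin 2) ℝ) :
    ∃ C : ℝ, 0 ≤ C ∧ ∀ (v : Fin 2 → ℝ) (M : ℝ), 1 ≤ M → (∀ j, |v j| ≤ M) →
      |eval v p| ≤ C * M ^ p.totalDegree := by
  refine ⟨∑ d ∈ p.support, |coeff d p|, Finset.sum_nonneg fun _ _ => abs_nonneg _, ?_⟩
  intro v M hM hv
  rw [eval_eq]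
  refine le_trans (Finset.abs_sum_le_sum_abs _ _) ?_
  rw [Finset.sum_mul]
  apply Finset.sum_le_sum
  intro d hd
  rw [abs_mul]
  have h1 : |∏ j ∈ d.support, v j ^ d j| ≤ M ^ p.totalDegree := by
    rw [Finset.abs_prod]
    calc ∏ j ∈ d.support, |v j ^ d j|
        ≤ ∏ j ∈ d.support, M ^ d j := by
          apply Finset.prod_le_prod (fun _ _ => abs_nonneg _)
          intro j _
          rw [abs_pow]
          exact pow_le_pow_left₀ (abs_nonneg _) (hv j) _
      _ = M ^ (∑ j ∈ d.support, d j) := Finset.prod_pow_eq_pow_sum _ _ _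
      _ ≤ M ^ p.totalDegree := by
          apply pow_le_pow_right₀ hM
          have := le_totalDegree hd
          rw [sum_id_eq_degree] at this
          exact this
  exact mul_le_mul_of_nonneg_left h1 (abs_nonneg _)

end EllipticAux

theorem elliptic_top_part_bounded_hyperbolic_region
    (f : MvPolynomial (Fin 2) ℝ) (n : ℕ) (hn : 3 ≤ n)
    (hdeg : f.totalDegree = n)
    (hell : ∀ x y : ℝ, (x, y) ≠ (0, 0) →
      0 < eval ![x, y] (Hess (homogeneousComponent n f))) :
    Bornology.IsBounded {p : ℝ × ℝ | eval ![p.1, p.2] (Hess f) ≤ 0} := by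
  classical
  open EllipticAux in
  set fn := homogeneousComponent n f with hfn
  set r : MvPolynomial (Fin 2) ℝ := f - fn with hr
  set k := n - 2 with hk
  have hk1 : 1 ≤ k := by omega
  set K := 2 * k - 1 with hK
  have hKk : K + 1 = 2 * k := by omega
  -- fn is homogeneous of degree n
  have hhom : fn.IsHomogeneous n := homogeneousComponent_isHomogeneous n f
  -- second derivatives of fn are homogeneous of degree k
  have hA : ∀ i j : Fin 2, (pderiv i (pderiv j fn)).IsHomogeneous k := by
    intro i j
    have h1 : fn.IsHomogeneous (k + 1 + 1) := by
      have : k + 1 + 1 = n := by omega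
      rwa [this]
    exact pderiv_isHomogeneous (pderiv_isHomogeneous h1 j) i
  -- Hess fn homogeneous of degree 2k
  have hHn : (Hess fn).IsHomogeneous (2 * k) := by
    have h1 : ((pderiv (0:Fin 2) (pderiv (0:Fin 2) fn)) *
        (pderiv (1:Fin 2) (pderiv (1:Fin 2) fn))).IsHomogeneous (k + k) :=
      (hA 0 0).mul (hA 1 1)
    have h2 : ((pderiv (0:Fin 2) (pderiv (1:Fin 2) fn)) ^ 2).IsHomogeneous (k + k) := by
      rw [sq]
      exact (hA 0 1).mul (hA 0 1)
    have := h1.sub h2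
    rw [show k + k = 2 * k by ring] at this
    exact this
  -- total degree of r
  have hrdeg : r.totalDegree ≤ n - 1 := by
    have hfsum : (∑ i ∈ Finset.range (n + 1), homogeneousComponent i f) = f := by
      rw [← hdeg]
      exact sum_homogeneousComponent f
    have hr2 : r = ∑ i ∈ Finset.range n, homogeneousComponent i f := by
      have hfr : f = (∑ i ∈ Finset.range n, homogeneousComponent i f) +
          homogeneousComponent n f := by
        conv_lhs => rw [← hfsum]
        rw [Finset.sum_range_succ]
      rw [hr, hfn]
      nth_rewrite 1 [hfr]
      ring
    rw [hr2]
    apply totalDegree_finsetSum_le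
    intro i hi
    refine le_trans (homogeneousComponent_isHomogeneous i f).totalDegree_le ?_
    have := Finset.mem_range.mp hi
    omega
  -- second derivatives of r have total degree ≤ k - 1
  have hB : ∀ i j : Fin 2, (pderiv i (pderiv j r)).totalDegree ≤ k - 1 := by
    intro i j
    have h1 : r.totalDegree ≤ (k - 1) + 1 + 1 := by omega
    exact totalDegree_pderiv_le' (totalDegree_pderiv_le' h1 j) i
  -- g := Hess f - Hess fn has total degree ≤ K
  set g : MvPolynomial (Fin 2) ℝ := Hess f - Hess fn with hg
  have hsplit : ∀ i j : Fin 2, pderiv i (pderiv j f) =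
      pderiv i (pderiv j r) + pderiv i (pderiv j fn) := by
    intro i j
    have : f = r + fn := by rw [hr]; ring
    rw [this, map_add, map_add]
  have hgdeg : g.totalDegree ≤ K := by
    have hexp : g =
        pderiv 0 (pderiv 0 r) * pderiv 1 (pderiv 1 r) +
        pderiv 0 (pderiv 0 r) * pderiv 1 (pderiv 1 fn) +
        pderiv 0 (pderiv 0 fn) * pderiv 1 (pderiv 1 r) +
        (-(pderiv 0 (pderiv 1 r) * pderiv 0 (pderiv 1 r)) +
         -(pderiv 0 (pderiv 1 r) * pderiv 0 (pderiv 1 fn)) +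
         -(pderiv 0 (pderiv 1 fn) * pderiv 0 (pderiv 1 r))) := by
      rw [hg]
      unfold Hess
      rw [hsplit 0 0, hsplit 1 1, hsplit 0 1]
      ring
    have hmulAB : ∀ p q : MvPolynomial (Fin 2) ℝ, p.totalDegree ≤ k - 1 →
        q.totalDegree ≤ k → (p * q).totalDegree ≤ K := by
      intro p q hp hq
      refine le_trans (totalDegree_mul p q) ?_
      omega
    have hmulBA : ∀ p q : MvPolynomial (Fin 2) ℝ, p.totalDegree ≤ k →
        q.totalDegree ≤ k - 1 → (p * q).totalDegree ≤ K := by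
      intro p q hp hq
      refine le_trans (totalDegree_mul p q) ?_
      omega
    have t1 := hmulAB _ _ (hB 0 0) (le_trans (hB 1 1) (by omega))
    have t2 := hmulAB _ _ (hB 0 0) (hA 1 1).totalDegree_le
    have t3 := hmulBA _ _ (hA 0 0).totalDegree_le (hB 1 1)
    have t4 := hmulAB _ _ (hB 0 1) (le_trans (hB 0 1) (by omega))
    have t5 := hmulAB _ _ (hB 0 1) (hA 0 1).totalDegree_le
    have t6 := hmulBA _ _ (hA 0 1).totalDegree_le (hB 0 1)
    rw [hexp]
    refine le_trans (totalDegree_add _ _) (max_le (le_trans (totalDegree_add _ _)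
      (max_le (le_trans (totalDegree_add _ _) (max_le t1 t2)) t3)) ?_)
    refine le_trans (totalDegree_add _ _) (max_le (le_trans (totalDegree_add _ _)
      (max_le ?_ ?_)) ?_)
    · rwa [totalDegree_neg]
    · rwa [totalDegree_neg]
    · rwa [totalDegree_neg]
  -- bound on |eval g|
  obtain ⟨C, hC0, hC⟩ := eval_abs_le g
  -- minimum of Hess fn on the unit sphere
  have hvec : Continuous fun q : ℝ × ℝ => (![q.1, q.2] : Fin 2 → ℝ) := by
    refine continuous_pi fun i => ?_
    fin_cases i
    · simpa using continuous_fst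
    · simpa using continuous_snd
  have hcont : Continuous fun q : ℝ × ℝ => eval ![q.1, q.2] (Hess fn) :=
    (MvPolynomial.continuous_eval (Hess fn)).comp hvec
  have hsphne : (Metric.sphere (0 : ℝ × ℝ) 1).Nonempty := by
    refine ⟨(1, 0), ?_⟩
    simp [Prod.norm_def]
  obtain ⟨q0, hq0S, hq0min⟩ :=
    (isCompact_sphere (0 : ℝ × ℝ) 1).exists_isMinOn hsphne hcont.continuousOn
  set c := eval ![q0.1, q0.2] (Hess fn) with hc
  have hq0ne : (q0.1, q0.2) ≠ ((0 : ℝ), (0 : ℝ)) := by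
    intro hcon
    have h1 : ‖q0‖ = 1 := mem_sphere_zero_iff_norm.mp hq0S
    have : q0 = 0 := by
      ext
      · exact congrArg Prod.fst hcon
      · exact congrArg Prod.snd hcon
    rw [this] at h1
    simp at h1
  have hcpos : 0 < c := hell q0.1 q0.2 hq0ne
  -- scaling lower bound for Hess fn
  have hscale : ∀ q : ℝ × ℝ, 1 ≤ ‖q‖ →
      c * ‖q‖ ^ (2 * k) ≤ eval ![q.1, q.2] (Hess fn) := by
    intro q hq
    have hM : (0 : ℝ) < ‖q‖ := lt_of_lt_of_le one_pos hq
    set u : ℝ × ℝ := ‖q‖⁻¹ • q with hu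
    have huS : u ∈ Metric.sphere (0 : ℝ × ℝ) 1 := by
      rw [mem_sphere_zero_iff_norm, hu, norm_smul, norm_inv, norm_norm,
        inv_mul_cancel₀ (ne_of_gt hM)]
    have hqu : (fun j => ‖q‖ * (![u.1, u.2] j)) = ![q.1, q.2] := by
      funext j
      fin_cases j
      · simp [hu, Prod.smul_def, mul_inv_cancel_left₀ (ne_of_gt hM)]
      · simp [hu, Prod.smul_def, mul_inv_cancel_left₀ (ne_of_gt hM)]
    have h1 : eval ![q.1, q.2] (Hess fn) = ‖q‖ ^ (2 * k) * eval ![u.1, u.2] (Hess fn) := by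
      rw [← hqu, eval_smul_of_isHomogeneous hHn]
    have h2 : c ≤ eval ![u.1, u.2] (Hess fn) := hq0min huS
    rw [h1]
    have h3 : (0 : ℝ) ≤ ‖q‖ ^ (2 * k) := pow_nonneg (norm_nonneg q) _
    calc c * ‖q‖ ^ (2 * k) = ‖q‖ ^ (2 * k) * c := by ring
      _ ≤ ‖q‖ ^ (2 * k) * eval ![u.1, u.2] (Hess fn) :=
          mul_le_mul_of_nonneg_left h2 h3
  -- choose radius
  set R : ℝ := max 1 (C / c + 1) with hR
  have hR1 : 1 ≤ R := le_max_left _ _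
  refine (Metric.isBounded_closedBall (x := (0 : ℝ × ℝ)) (r := R)).subset ?_
  intro q hqset
  rw [Set.mem_setOf_eq] at hqset
  rw [Metric.mem_closedBall, dist_zero_right]
  by_contra hcon
  push_neg at hcon
  have hM1 : 1 ≤ ‖q‖ := le_trans hR1 (le_of_lt hcon)
  have hMpos : (0 : ℝ) < ‖q‖ := lt_of_lt_of_le one_pos hM1
  -- bound on g at q
  have hvle : ∀ j : Fin 2, |(![q.1, q.2] : Fin 2 → ℝ) j| ≤ ‖q‖ := by
    intro j
    fin_cases j
    · simpa using norm_fst_le q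
    · simpa using norm_snd_le q
  have hgle : |eval ![q.1, q.2] g| ≤ C * ‖q‖ ^ K := by
    refine le_trans (hC _ _ hM1 hvle) ?_
    have := pow_le_pow_right₀ hM1 hgdeg
    nlinarith [pow_nonneg (norm_nonneg q) g.totalDegree]
  -- positivity of Hess f at q
  have heval : eval ![q.1, q.2] (Hess f) =
      eval ![q.1, q.2] (Hess fn) + eval ![q.1, q.2] g := by
    rw [hg, map_sub]; ring
  have hlow : c * ‖q‖ ^ (2 * k) ≤ eval ![q.1, q.2] (Hess fn) := hscale q hM1
  have hCc : C / c + 1 < ‖q‖ := lt_of_le_of_lt (le_max_right _ _) hcon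
  have hCclt : C < c * ‖q‖ := by
    rw [div_add_one (ne_of_gt hcpos), div_lt_iff₀ hcpos] at hCc
    nlinarith
  have hpow : ‖q‖ ^ (2 * k) = ‖q‖ ^ K * ‖q‖ := by
    rw [← hKk, pow_succ]
  have hKpos : (0 : ℝ) < ‖q‖ ^ K := pow_pos hMpos _
  have : 0 < eval ![q.1, q.2] (Hess f) := by
    rw [heval]
    have h1 : -(C * ‖q‖ ^ K) ≤ eval ![q.1, q.2] g := neg_le_of_abs_le hgle
    have h2 : c * ‖q‖ ^ (2 * k) = ‖q‖ ^ K * (c * ‖q‖) := by rw [hpow]; ring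
    nlinarith
  linarith
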